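/- Let A₁, ..., A_K be cellular algebras over an integral domain R with posets Γ₁, ..., Γ_K and cellular bases {a^γ_{s,t}}. Then the tensor product A₁ ⊗_R ⋯ ⊗_R A_K is a cellular algebra with involution the tensor product of the involutions, poset the product poset Γ₁ × ⋯ × Γ_K, index sets T(γ₁) × ⋯ × T(γ_K), and cellular basis the simple tensors a^{γ₁}_{s₁,t₁} ⊗ ⋯ ⊗ a^{γ_K}_{s_K,t_K}. Moreover the cell modules of the tensor product algebra are the tensor products Δ^{γ₁} ⊗ ⋯ ⊗ Δ^{γ_K} of cell modules, and if each A_i is cyclic cellular then so is the tensor product. -/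

import Mathlib

open scoped TensorProduct

/-- A cell datum (Graham–Lehrer cellular basis, in the weak form of Definition 2.1):
an `R`-linear algebra involution `star`, a poset `Γ`, finite index sets `T γ`, and a basis
`c γ s t` satisfying the cellular multiplication rule (modulo the span `Ā^γ` of the basis
elements `c μ u w` with `μ > γ`) and the cellular involution rule. -/
structure CellDatum (R : Type*) [CommRing R] (A : Type*) [Ring A] [Algebra R A]
    (Γ : Type*) [PartialOrder Γ] (T : Γ → Type*) [∀ γ, Fintype (T γ)] where
  star : A →ₗ[R] A
  star_mul : ∀ a b : A, star (a * b) = star b * star a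
  star_star : ∀ a : A, star (star a) = a
  c : (γ : Γ) → T γ → T γ → A
  indep : LinearIndependent R fun p : Σ γ : Γ, T γ × T γ => c p.1 p.2.1 p.2.2
  span_top : Submodule.span R (Set.range fun p : Σ γ : Γ, T γ × T γ => c p.1 p.2.1 p.2.2) = ⊤
  mult : ∀ (γ : Γ) (s : T γ) (a : A), ∃ r : T γ → R, ∀ t : T γ,
    a * c γ s t - ∑ v : T γ, r v • c γ v t ∈
      Submodule.span R {x : A | ∃ μ : Γ, γ < μ ∧ ∃ u w : T μ, x = c μ u w}
  star_c : ∀ (γ : Γ) (s t : T γ),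
    star (c γ s t) - c γ t s ∈
      Submodule.span R {x : A | ∃ μ : Γ, γ < μ ∧ ∃ u w : T μ, x = c μ u w}

namespace CellDatum

variable {R : Type*} [CommRing R] {A : Type*} [Ring A] [Algebra R A]
  {Γ : Type*} [PartialOrder Γ] {T : Γ → Type*} [∀ γ, Fintype (T γ)]

/-- The ideal `Ā^γ`, spanned by the basis elements `c μ u w` with `μ > γ`. -/
def Abar (D : CellDatum R A Γ T) (γ : Γ) : Submodule R A :=
  Submodule.span R {x : A | ∃ μ : Γ, γ < μ ∧ ∃ u w : T μ, x = D.c μ u w}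

/-- The ideal `A^γ`, spanned by the basis elements `c μ u w` with `μ ≥ γ`. -/
def Aup (D : CellDatum R A Γ T) (γ : Γ) : Submodule R A :=
  Submodule.span R {x : A | ∃ μ : Γ, γ ≤ μ ∧ ∃ u w : T μ, x = D.c μ u w}

end CellDatum

/-- `e : T γ → M` exhibits the `A`-module `M` as (a copy of) the cell module `Δ^γ`:
`e` is an `R`-basis of `M`, and `A` acts on it by the structure coefficients of the cellular
basis. -/
def IsCellModule {R : Type*} [CommRing R] {A : Type*} [Ring A] [Algebra R A]
    {Γ : Type*} [PartialOrder Γ] {T : Γ → Type*} [∀ γ, Fintype (T γ)]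
    (D : CellDatum R A Γ T) (γ : Γ) (M : Type*) [AddCommGroup M] [Module R M]
    [Module A M] [IsScalarTower R A M] (e : T γ → M) : Prop :=
  LinearIndependent R e ∧ Submodule.span R (Set.range e) = ⊤ ∧
    ∀ (a : A) (s : T γ) (r : T γ → R),
      (∀ t : T γ, a * D.c γ s t - ∑ v : T γ, r v • D.c γ v t ∈ D.Abar γ) →
      a • e s = ∑ v : T γ, r v • e v

open PiTensorProduct

/- ### Auxiliary general lemmas about `PiTensorProduct` -/

section Aux
variable {R : Type*} [CommRing R] {ι : Type*} [Fintype ι]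
  {M : ι → Type*} [∀ i, AddCommGroup (M i)] [∀ i, Module R (M i)]

/-- The tensor product of linear functionals, as a functional on the tensor product. -/
noncomputable def dualT (φ : ∀ i, M i →ₗ[R] R) : (⨂[R] i, M i) →ₗ[R] R :=
  PiTensorProduct.lift ((MultilinearMap.mkPiAlgebra R ι R).compLinearMap φ)

@[simp] lemma dualT_tprod (φ : ∀ i, M i →ₗ[R] R) (f : ∀ i, M i) :
    dualT φ (⨂ₜ[R] i, f i) = ∏ i, φ i (f i) := by
  simp [dualT]

/-- A family admitting a `δ`-dual family of functionals is linearly independent. -/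
lemma li_of_dual {κ : Type*} [DecidableEq κ] {N : Type*} [AddCommGroup N] [Module R N]
    (v : κ → N) (φ : κ → N →ₗ[R] R)
    (h : ∀ j k, φ k (v j) = if j = k then (1:R) else 0) : LinearIndependent R v := by
  classical
  rw [linearIndependent_iff']
  intro s g hg j hj
  have h2 := congrArg (φ j) hg
  simp only [map_sum, map_smul, h, smul_eq_mul, mul_ite, mul_one, mul_zero, map_zero,
    Finset.sum_ite_eq' s, hj, if_pos] at h2
  exact h2

/-- A pure tensor of elements of spans lies in the span of the pure tensors of generators. -/
lemma tprod_mem_span (S : ∀ i, Set (M i)) (f : ∀ i, M i)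
    (hf : ∀ i, f i ∈ Submodule.span R (S i)) :
    (⨂ₜ[R] i, f i) ∈ Submodule.span R
      {x : ⨂[R] i, M i | ∃ g : ∀ i, M i, (∀ i, g i ∈ S i) ∧ x = ⨂ₜ[R] i, g i} := by
  classical
  suffices H : ∀ (s : Finset ι) (f : ∀ i, M i), (∀ i ∈ s, f i ∈ Submodule.span R (S i)) →
      (∀ i ∉ s, f i ∈ S i) → (⨂ₜ[R] i, f i) ∈ Submodule.span R
      {x : ⨂[R] i, M i | ∃ g : ∀ i, M i, (∀ i, g i ∈ S i) ∧ x = ⨂ₜ[R] i, g i} by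
    exact H Finset.univ f (fun i _ => hf i) (fun i hi => absurd (Finset.mem_univ i) hi)
  intro s
  induction s using Finset.induction_on with
  | empty =>
    intro f _ h2
    exact Submodule.subset_span ⟨f, fun i => h2 i (by simp), rfl⟩
  | insert j s' hj ih =>
    intro f h1 h2
    have hfj : f j ∈ Submodule.span R (S j) := h1 j (Finset.mem_insert_self j s')
    have key : ∀ (x : M j), x ∈ Submodule.span R (S j) →
        (⨂ₜ[R] i, Function.update f j x i) ∈ Submodule.span R
          {x : ⨂[R] i, M i | ∃ g : ∀ i, M i, (∀ i, g i ∈ S i) ∧ x = ⨂ₜ[R] i, g i} := by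
      intro x hx
      induction hx using Submodule.span_induction with
      | mem x hxS =>
        refine ih (Function.update f j x) ?_ ?_
        · intro i hi
          rcases eq_or_ne i j with rfl | hij
          · exact absurd hi hj
          · rw [Function.update_of_ne hij]
            exact h1 i (Finset.mem_insert_of_mem hi)
        · intro i hi
          rcases eq_or_ne i j with rfl | hij
          · rw [Function.update_self]; exact hxS
          · rw [Function.update_of_ne hij]
            exact h2 i (by simp [hij, hi])
      | zero => rw [show (fun i => Function.update f j (0:M j) i) = Function.update f j 0 from rfl,
          MultilinearMap.map_update_zero]; exact Submodule.zero_mem _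
      | add x y _ _ hx hy =>
        rw [show (fun i => Function.update f j (x+y) i) = Function.update f j (x+y) from rfl,
          MultilinearMap.map_update_add]
        exact Submodule.add_mem _ hx hy
      | smul a x _ hx =>
        rw [show (fun i => Function.update f j (a • x) i) = Function.update f j (a • x) from rfl,
          MultilinearMap.map_update_smul]
        exact Submodule.smul_mem _ _ hx
    have := key (f j) hfj
    rwa [show Function.update f j (f j) = f from Function.update_eq_self j f] at this

lemma span_tensor_top (S : ∀ i, Set (M i)) (hS : ∀ i, Submodule.span R (S i) = ⊤) :
    Submodule.span R
      {x : ⨂[R] i, M i | ∃ g : ∀ i, M i, (∀ i, g i ∈ S i) ∧ x = ⨂ₜ[R] i, g i} = ⊤ := by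
  rw [eq_top_iff, ← PiTensorProduct.span_tprod_eq_top, Submodule.span_le]
  rintro x ⟨f, rfl⟩
  exact tprod_mem_span S f (fun i => (hS i).symm ▸ Submodule.mem_top)

/-- Telescoping: if `z i ≡ y i` modulo `Q i`, all lying in `P i`, then the pure tensors of
`z` and `y` agree modulo the span of pure tensors with one entry in some `Q j` and all entries
in the `P i`. -/
lemma telescope (P Q : ∀ i, Submodule R (M i)) (z y : ∀ i, M i)
    (hz : ∀ i, z i ∈ P i) (hy : ∀ i, y i ∈ P i) (hd : ∀ i, z i - y i ∈ Q i) :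
    (⨂ₜ[R] i, z i) - (⨂ₜ[R] i, y i) ∈ Submodule.span R
      {x : ⨂[R] i, M i | ∃ j, ∃ g : ∀ i, M i,
        (∀ i, g i ∈ P i) ∧ g j ∈ Q j ∧ x = ⨂ₜ[R] i, g i} := by
  classical
  suffices H : ∀ s : Finset ι, (⨂ₜ[R] i, (if i ∈ s then z i else y i)) - (⨂ₜ[R] i, y i) ∈
      Submodule.span R {x : ⨂[R] i, M i |
        ∃ j, ∃ g : ∀ i, M i, (∀ i, g i ∈ P i) ∧ g j ∈ Q j ∧ x = ⨂ₜ[R] i, g i} by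
    simpa using H Finset.univ
  intro s
  induction s using Finset.induction_on with
  | empty => simp
  | insert j s' hj ih =>
    set w : ∀ i, M i := fun i => if i ∈ s' then z i else y i with hw
    have h1 : (fun i => if i ∈ insert j s' then z i else y i)
        = Function.update w j (z j) := by
      funext i
      rcases eq_or_ne i j with rfl | hij
      · simp
      · simp [Function.update_of_ne hij, hw, Finset.mem_insert, hij]
    have h2 : w = Function.update w j (y j) := by
      funext i
      rcases eq_or_ne i j with rfl | hij
      · simp [hw, hj]
      · simp [Function.update_of_ne hij]
    have step : (⨂ₜ[R] i, (if i ∈ insert j s' then z i else y i)) - (⨂ₜ[R] i, w i)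
        = ⨂ₜ[R] i, Function.update w j (z j - y j) i := by
      rw [h1]
      nth_rewrite 2 [h2]
      exact (MultilinearMap.map_update_sub _ _ _ _ _).symm
    have mem : (⨂ₜ[R] i, Function.update w j (z j - y j) i) ∈ Submodule.span R
        {x : ⨂[R] i, M i | ∃ j, ∃ g : ∀ i, M i,
          (∀ i, g i ∈ P i) ∧ g j ∈ Q j ∧ x = ⨂ₜ[R] i, g i} := by
      refine Submodule.subset_span ⟨j, Function.update w j (z j - y j), ?_, ?_, rfl⟩
      · intro i
        rcases eq_or_ne i j with rfl | hij
        · rw [Function.update_self]; exact Submodule.sub_mem _ (hz i) (hy i)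
        · rw [Function.update_of_ne hij]
          by_cases h : i ∈ s' <;> simp [hw, h, hz i, hy i]
      · rw [Function.update_self]; exact hd j
    have heq : (⨂ₜ[R] i, (if i ∈ insert j s' then z i else y i)) - (⨂ₜ[R] i, y i)
        = ((⨂ₜ[R] i, Function.update w j (z j - y j) i) + ((⨂ₜ[R] i, w i) - (⨂ₜ[R] i, y i))) := by
      rw [← step]; abel
    rw [heq]
    exact Submodule.add_mem _ mem ih
end Aux


section Aux3
variable {R : Type*} [CommRing R] {ι : Type*} [Fintype ι]
  {M : ι → Type*} [∀ i, AddCommGroup (M i)] [∀ i, Module R (M i)]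

lemma li_tensor_of_bases {κ : ι → Type*} (b : ∀ i, κ i → M i)
    (hli : ∀ i, LinearIndependent R (b i))
    (hsp : ∀ i, Submodule.span R (Set.range (b i)) = ⊤) :
    LinearIndependent R (fun s : ∀ i, κ i => ⨂ₜ[R] i, b i (s i)) := by
  classical
  set B : ∀ i, Module.Basis (κ i) R (M i) := fun i => Module.Basis.mk (hli i) (by rw [hsp i]) with hB
  refine li_of_dual _ (fun v => dualT (fun i => (B i).coord (v i))) ?_
  intro p q
  have hb : ∀ i, b i (p i) = B i (p i) := fun i => (Module.Basis.mk_apply (hli i) _ (p i)).symm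
  simp only [dualT_tprod, hb, Module.Basis.coord_apply, Module.Basis.repr_self, Finsupp.single_apply]
  rw [Fintype.prod_boole]
  simp only [funext_iff]

lemma span_tensor_of_bases {κ : ι → Type*} (b : ∀ i, κ i → M i)
    (hsp : ∀ i, Submodule.span R (Set.range (b i)) = ⊤) :
    Submodule.span R (Set.range (fun s : ∀ i, κ i => ⨂ₜ[R] i, b i (s i))) = ⊤ := by
  rw [eq_top_iff, ← span_tensor_top (R := R) (fun i => Set.range (b i)) hsp]
  refine Submodule.span_mono ?_
  rintro x ⟨g, hg, rfl⟩
  choose p hp using hg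
  exact ⟨p, congrArg (PiTensorProduct.tprod R) (funext fun i => hp i)⟩
end Aux3

/- ### The tensor product cell datum -/

section Main
variable {R : Type*} [CommRing R] {K : ℕ}
  {A : Fin K → Type*} [∀ i, Ring (A i)] [∀ i, Algebra R (A i)]
  {Γ : Fin K → Type*} [∀ i, PartialOrder (Γ i)]
  {T : ∀ i, Γ i → Type*} [∀ i γ, Fintype (T i γ)]
  (D : ∀ i, CellDatum R (A i) (Γ i) (T i))

open scoped Classical

/-- The cellular basis of a cellular algebra, as a `Module.Basis`. -/
noncomputable def cB (i : Fin K) : Module.Basis (Σ γ : Γ i, T i γ × T i γ) R (A i) :=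
  Module.Basis.mk (D i).indep (by rw [(D i).span_top])

lemma cB_apply (i : Fin K) (p : Σ γ : Γ i, T i γ × T i γ) :
    cB D i p = (D i).c p.1 p.2.1 p.2.2 :=
  Module.Basis.mk_apply _ _ _

lemma sigma_eq_iff {Γ : Fin K → Type*} {T : ∀ i, Γ i → Type*}
    (p q : Σ γ : ∀ i, Γ i, (∀ i, T i (γ i)) × (∀ i, T i (γ i))) :
    (∀ i, (⟨p.1 i, (p.2.1 i, p.2.2 i)⟩ : Σ γ, T i γ × T i γ) = ⟨q.1 i, (q.2.1 i, q.2.2 i)⟩) ↔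
      p = q := by
  constructor
  · obtain ⟨γp, sp, tp⟩ := p
    obtain ⟨γq, sq, tq⟩ := q
    intro h
    have hγ : γp = γq := funext fun i => congrArg Sigma.fst (h i)
    subst hγ
    have h2 : ∀ i, (sp i, tp i) = (sq i, tq i) := by
      intro i
      exact eq_of_heq (Sigma.mk.inj_iff.mp (h i)).2
    have hs : sp = sq := funext fun i => congrArg Prod.fst (h2 i)
    have ht : tp = tq := funext fun i => congrArg Prod.snd (h2 i)
    simp [hs, ht]
  · rintro rfl i; rfl

/-- Dual functionals on the tensor product algebra. -/
noncomputable def tdual (q : Σ γ : ∀ i, Γ i, (∀ i, T i (γ i)) × (∀ i, T i (γ i))) :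
    (⨂[R] i, A i) →ₗ[R] R :=
  dualT (fun i => (cB D i).coord ⟨q.1 i, (q.2.1 i, q.2.2 i)⟩)

lemma tdual_c (p q : Σ γ : ∀ i, Γ i, (∀ i, T i (γ i)) × (∀ i, T i (γ i))) :
    tdual D q (⨂ₜ[R] i, (D i).c (p.1 i) (p.2.1 i) (p.2.2 i)) = if p = q then 1 else 0 := by
  classical
  have hc : ∀ i, (D i).c (p.1 i) (p.2.1 i) (p.2.2 i)
      = cB D i ⟨p.1 i, (p.2.1 i, p.2.2 i)⟩ := fun i => (cB_apply D i ⟨p.1 i, (p.2.1 i, p.2.2 i)⟩).symm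
  simp only [tdual, dualT_tprod, hc, Module.Basis.coord_apply, Module.Basis.repr_self, Finsupp.single_apply]
  rw [Fintype.prod_boole]
  simp only [sigma_eq_iff p q]

/-- The set of higher cellular-basis tensors. -/
def tAbarSet (γ : ∀ i, Γ i) : Set (⨂[R] i, A i) :=
  {x | ∃ μ : ∀ i, Γ i, γ < μ ∧ ∃ u w : ∀ i, T i (μ i),
    x = ⨂ₜ[R] i, (D i).c (μ i) (u i) (w i)}

lemma tensor_mem_tAbar (γ : ∀ i, Γ i) (g : ∀ i, A i) (j : Fin K)
    (hg : ∀ i, g i ∈ Submodule.span R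
      {x : A i | ∃ μ, γ i ≤ μ ∧ ∃ u w : T i μ, x = (D i).c μ u w})
    (hj : g j ∈ Submodule.span R
      {x : A j | ∃ μ, γ j < μ ∧ ∃ u w : T j μ, x = (D j).c μ u w}) :
    (⨂ₜ[R] i, g i) ∈ Submodule.span R (tAbarSet D γ) := by
  classical
  set S : ∀ i, Set (A i) := fun i =>
    if i = j then {x : A i | ∃ μ, γ i < μ ∧ ∃ u w : T i μ, x = (D i).c μ u w}
    else {x : A i | ∃ μ, γ i ≤ μ ∧ ∃ u w : T i μ, x = (D i).c μ u w} with hS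
  have h1 := tprod_mem_span S g (fun i => by
    rcases eq_or_ne i j with rfl | hij
    · simpa [hS] using hj
    · simpa [hS, hij] using hg i)
  refine Submodule.span_le.mpr ?_ h1
  rintro x ⟨g', hg', rfl⟩
  have key : ∀ i, ∃ (μ : Γ i) (u w : T i μ), γ i ≤ μ ∧ (i = j → γ i < μ) ∧
      g' i = (D i).c μ u w := by
    intro i
    have := hg' i
    rcases eq_or_ne i j with rfl | hij
    · simp only [hS, if_pos rfl] at this
      obtain ⟨μ, hμ, u, w, hx⟩ := this
      exact ⟨μ, u, w, le_of_lt hμ, fun _ => hμ, hx⟩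
    · simp only [hS, if_neg hij] at this
      obtain ⟨μ, hμ, u, w, hx⟩ := this
      exact ⟨μ, u, w, hμ, fun h => absurd h hij, hx⟩
  choose μ u w hle hlt hcw using key
  refine Submodule.subset_span ⟨μ, ?_, u, w, ?_⟩
  · refine lt_of_le_of_ne (fun i => hle i) ?_
    intro hγμ
    exact absurd (congrFun hγμ j) (ne_of_lt (hlt j rfl))
  · congr 1
    funext i
    exact hcw i

/-- If `z i ≡ y i` modulo `Ābar` and the `y i` lie in `A^{γ i}`, then the pure tensors of
`z` and `y` agree modulo the higher tensors. -/
lemma sub_mem_tAbar (γ : ∀ i, Γ i) (z y : ∀ i, A i)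
    (hy : ∀ i, y i ∈ Submodule.span R
      {x : A i | ∃ μ, γ i ≤ μ ∧ ∃ u w : T i μ, x = (D i).c μ u w})
    (hd : ∀ i, z i - y i ∈ Submodule.span R
      {x : A i | ∃ μ, γ i < μ ∧ ∃ u w : T i μ, x = (D i).c μ u w}) :
    (⨂ₜ[R] i, z i) - (⨂ₜ[R] i, y i) ∈ Submodule.span R (tAbarSet D γ) := by
  classical
  set P : ∀ i, Submodule R (A i) := fun i =>
    Submodule.span R {x : A i | ∃ μ, γ i ≤ μ ∧ ∃ u w : T i μ, x = (D i).c μ u w} with hP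
  set Q : ∀ i, Submodule R (A i) := fun i =>
    Submodule.span R {x : A i | ∃ μ, γ i < μ ∧ ∃ u w : T i μ, x = (D i).c μ u w} with hQ
  have hQP : ∀ i, Q i ≤ P i := fun i => Submodule.span_mono (by
    rintro x ⟨μ, hμ, u, w, hx⟩; exact ⟨μ, le_of_lt hμ, u, w, hx⟩)
  have hzz : ∀ i, z i ∈ P i := fun i => by
    have := Submodule.add_mem _ (hQP i (hd i)) (hy i)
    simpa using this
  have htel := telescope P Q z y hzz hy hd
  refine Submodule.span_le.mpr ?_ htel
  rintro x ⟨j, g, hgP, hgQ, rfl⟩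
  exact tensor_mem_tAbar D γ g j hgP hgQ

/-- The multiplication rule for pure tensors, with explicit product coefficients. -/
lemma mult_pure (γ : ∀ i, Γ i) (s : ∀ i, T i (γ i)) (f : ∀ i, A i)
    (rr : ∀ i, T i (γ i) → R)
    (hrr : ∀ (i) (t' : T i (γ i)),
      f i * (D i).c (γ i) (s i) t' - ∑ v : T i (γ i), rr i v • (D i).c (γ i) v t' ∈
        Submodule.span R {x : A i | ∃ μ, γ i < μ ∧ ∃ u w : T i μ, x = (D i).c μ u w})
    (t : ∀ i, T i (γ i)) :
    (⨂ₜ[R] i, f i) * (⨂ₜ[R] i, (D i).c (γ i) (s i) (t i))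
      - ∑ v : ∀ i, T i (γ i), (∏ i, rr i (v i)) • (⨂ₜ[R] i, (D i).c (γ i) (v i) (t i)) ∈
      Submodule.span R (tAbarSet D γ) := by
  classical
  set z : ∀ i, A i := fun i => f i * (D i).c (γ i) (s i) (t i) with hz'
  set y : ∀ i, A i := fun i => ∑ v : T i (γ i), rr i v • (D i).c (γ i) v (t i) with hy'
  have hy : ∀ i, y i ∈ Submodule.span R
      {x : A i | ∃ μ, γ i ≤ μ ∧ ∃ u w : T i μ, x = (D i).c μ u w} := by
    intro i
    refine Submodule.sum_mem _ fun v _ => Submodule.smul_mem _ _ ?_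
    exact Submodule.subset_span ⟨γ i, le_refl _, v, t i, rfl⟩
  have hd : ∀ i, z i - y i ∈ Submodule.span R
      {x : A i | ∃ μ, γ i < μ ∧ ∃ u w : T i μ, x = (D i).c μ u w} := fun i => hrr i (t i)
  have hsub := sub_mem_tAbar D γ z y hy hd
  have hzmul : (⨂ₜ[R] i, z i) = (⨂ₜ[R] i, f i) * (⨂ₜ[R] i, (D i).c (γ i) (s i) (t i)) :=
    (PiTensorProduct.tprod_mul_tprod _ _).symm
  have hysum : (⨂ₜ[R] i, y i)
      = ∑ v : ∀ i, T i (γ i), (∏ i, rr i (v i)) • (⨂ₜ[R] i, (D i).c (γ i) (v i) (t i)) := by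
    rw [hy']
    rw [show (⨂ₜ[R] i, (∑ v : T i (γ i), rr i v • (D i).c (γ i) v (t i)))
        = ∑ v : ∀ i, T i (γ i), ⨂ₜ[R] i, (rr i (v i) • (D i).c (γ i) (v i) (t i)) from
      MultilinearMap.map_sum _ _]
    exact Finset.sum_congr rfl fun v _ => MultilinearMap.map_smul_univ _ _ _
  rw [← hzmul, ← hysum]
  exact hsub

/-- Coefficient extraction: uniqueness of the structure coefficients modulo `Ā^γ`. -/
lemma coeff_unique (γ : ∀ i, Γ i) (t : ∀ i, T i (γ i)) (d : (∀ i, T i (γ i)) → R)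
    (h : (∑ v : ∀ i, T i (γ i), d v • (⨂ₜ[R] i, (D i).c (γ i) (v i) (t i))) ∈
      Submodule.span R (tAbarSet D γ)) :
    ∀ v, d v = 0 := by
  classical
  intro v₀
  set ψ := tdual D ⟨γ, v₀, t⟩ with hψ
  have hker : Submodule.span R (tAbarSet D γ) ≤ LinearMap.ker ψ := by
    rw [Submodule.span_le]
    rintro x ⟨μ, hμ, u, w, rfl⟩
    have hc := tdual_c D ⟨μ, u, w⟩ ⟨γ, v₀, t⟩
    simp only [SetLike.mem_coe, LinearMap.mem_ker]
    rw [hψ, hc, if_neg]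
    intro hEq
    have : μ = γ := congrArg Sigma.fst hEq
    exact absurd this (ne_of_gt hμ)
  have h0 : ψ (∑ v : ∀ i, T i (γ i), d v • (⨂ₜ[R] i, (D i).c (γ i) (v i) (t i))) = 0 :=
    hker h
  have hval : ∀ v : ∀ i, T i (γ i),
      ψ (⨂ₜ[R] i, (D i).c (γ i) (v i) (t i)) = if v = v₀ then 1 else 0 := by
    intro v
    have hc := tdual_c D ⟨γ, v, t⟩ ⟨γ, v₀, t⟩
    have hiff : ((⟨γ, (v, t)⟩ : Σ γ' : ∀ i, Γ i, (∀ i, T i (γ' i)) × (∀ i, T i (γ' i)))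
        = ⟨γ, (v₀, t)⟩) ↔ v = v₀ := by
      constructor
      · intro hEq
        exact congrArg Prod.fst (eq_of_heq (Sigma.mk.inj_iff.mp hEq).2)
      · rintro rfl; rfl
    rw [hψ, hc, if_congr hiff rfl rfl]
  rw [map_sum] at h0
  simp only [map_smul, hval, smul_eq_mul, mul_ite, mul_one, mul_zero] at h0
  simpa [Finset.sum_ite_eq'] using h0

/-- The tensor product involution. -/
noncomputable def tstar : (⨂[R] i, A i) →ₗ[R] (⨂[R] i, A i) :=
  PiTensorProduct.map (fun i => (D i).star)

@[simp] lemma tstar_tprod (f : ∀ i, A i) :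
    tstar D (⨂ₜ[R] i, f i) = ⨂ₜ[R] i, (D i).star (f i) :=
  PiTensorProduct.map_tprod _ _

lemma tstar_mul (a b : ⨂[R] i, A i) : tstar D (a * b) = tstar D b * tstar D a := by
  induction a using PiTensorProduct.induction_on with
  | smul_tprod r f =>
    induction b using PiTensorProduct.induction_on with
    | smul_tprod r' g =>
      have h1 : (r • tprod R f) * (r' • tprod R g) = (r * r') • (tprod R f * tprod R g) := by
        rw [smul_mul_assoc, mul_smul_comm, smul_smul]
      have h2 : (r' • tstar D (tprod R g)) * (r • tstar D (tprod R f))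
          = (r * r') • (tstar D (tprod R g) * tstar D (tprod R f)) := by
        rw [smul_mul_assoc, mul_smul_comm, smul_smul, mul_comm r r']
      rw [h1, map_smul, map_smul, map_smul, h2, tprod_mul_tprod, tstar_tprod, tstar_tprod,
        tstar_tprod, tprod_mul_tprod]
      exact congrArg ((r * r') • ·) (congrArg (PiTensorProduct.tprod R)
        (funext fun i => (D i).star_mul (f i) (g i)))
    | add x y hx hy =>
      rw [mul_add, map_add, map_add, hx, hy, add_mul]
  | add x y hx hy =>
    rw [add_mul, map_add, map_add, hx, hy, mul_add]

lemma tstar_tstar (a : ⨂[R] i, A i) : tstar D (tstar D a) = a := by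
  induction a using PiTensorProduct.induction_on with
  | smul_tprod r f =>
    rw [map_smul, map_smul, tstar_tprod, tstar_tprod]
    exact congrArg (r • ·) (congrArg (PiTensorProduct.tprod R)
      (funext fun i => (D i).star_star (f i)))
  | add x y hx hy => rw [map_add, map_add, hx, hy]

/-- The tensor product cell datum. -/
noncomputable def TD : CellDatum R (⨂[R] i, A i) (∀ i, Γ i) (fun γ => ∀ i, T i (γ i)) where
  star := tstar D
  star_mul := tstar_mul D
  star_star := tstar_tstar D
  c := fun γ s t => ⨂ₜ[R] i, (D i).c (γ i) (s i) (t i)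
  indep := by
    classical
    exact li_of_dual _ (tdual D) (tdual_c D)
  span_top := by
    rw [eq_top_iff]
    rw [← span_tensor_top (R := R)
      (fun i => Set.range fun p : Σ γ : Γ i, T i γ × T i γ => (D i).c p.1 p.2.1 p.2.2)
      (fun i => (D i).span_top)]
    refine Submodule.span_mono ?_
    rintro x ⟨g, hg, rfl⟩
    choose p hp using hg
    refine ⟨⟨fun i => (p i).1, fun i => (p i).2.1, fun i => (p i).2.2⟩, ?_⟩
    simp only
    exact congrArg (PiTensorProduct.tprod R)
      (funext fun i => ((hp i) : (D i).c (p i).fst (p i).snd.1 (p i).snd.2 = g i))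
  mult := by
    intro γ s a
    induction a using PiTensorProduct.induction_on with
    | smul_tprod r₀ f =>
      have key := fun i => (D i).mult (γ i) (s i) (f i)
      choose rr hrr using key
      refine ⟨fun v => r₀ * ∏ i, rr i (v i), fun t => ?_⟩
      have hp := mult_pure D γ s f rr hrr t
      have heq : (r₀ • tprod R f) * (⨂ₜ[R] i, (D i).c (γ i) (s i) (t i))
          - ∑ v : ∀ i, T i (γ i), (r₀ * ∏ i, rr i (v i)) •
            (⨂ₜ[R] i, (D i).c (γ i) (v i) (t i))
          = r₀ • ((⨂ₜ[R] i, f i) * (⨂ₜ[R] i, (D i).c (γ i) (s i) (t i))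
            - ∑ v : ∀ i, T i (γ i), (∏ i, rr i (v i)) •
              (⨂ₜ[R] i, (D i).c (γ i) (v i) (t i))) := by
        rw [smul_sub, smul_mul_assoc, Finset.smul_sum]
        congr 1
        refine Finset.sum_congr rfl fun v _ => ?_
        rw [smul_smul]
      rw [heq]
      exact Submodule.smul_mem _ _ hp
    | add x y hx hy =>
      obtain ⟨rx, hrx⟩ := hx
      obtain ⟨ry, hry⟩ := hy
      refine ⟨fun v => rx v + ry v, fun t => ?_⟩
      have heq : (x + y) * (⨂ₜ[R] i, (D i).c (γ i) (s i) (t i))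
          - ∑ v : ∀ i, T i (γ i), (rx v + ry v) • (⨂ₜ[R] i, (D i).c (γ i) (v i) (t i))
          = (x * (⨂ₜ[R] i, (D i).c (γ i) (s i) (t i))
              - ∑ v : ∀ i, T i (γ i), rx v • (⨂ₜ[R] i, (D i).c (γ i) (v i) (t i)))
            + (y * (⨂ₜ[R] i, (D i).c (γ i) (s i) (t i))
              - ∑ v : ∀ i, T i (γ i), ry v • (⨂ₜ[R] i, (D i).c (γ i) (v i) (t i))) := by
        rw [add_mul]
        simp only [add_smul, Finset.sum_add_distrib]
        abel
      rw [heq]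
      exact Submodule.add_mem _ (hrx t) (hry t)
  star_c := by
    intro γ s t
    have := sub_mem_tAbar D γ (fun i => (D i).star ((D i).c (γ i) (s i) (t i)))
      (fun i => (D i).c (γ i) (t i) (s i))
      (fun i => Submodule.subset_span ⟨γ i, le_refl _, t i, s i, rfl⟩)
      (fun i => (D i).star_c (γ i) (s i) (t i))
    rw [← tstar_tprod] at this
    exact this

@[simp] lemma TD_c (γ : ∀ i, Γ i) (s t : ∀ i, T i (γ i)) :
    (TD D).c γ s t = ⨂ₜ[R] i, (D i).c (γ i) (s i) (t i) := rfl

lemma TD_Abar (γ : ∀ i, Γ i) :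
    (TD D).Abar γ = Submodule.span R (tAbarSet D γ) := rfl
end Main

section Main2
variable {R : Type*} [CommRing R] {K : ℕ}
  {A : Fin K → Type*} [∀ i, Ring (A i)] [∀ i, Algebra R (A i)]
  {Γ : Fin K → Type*} [∀ i, PartialOrder (Γ i)]
  {T : ∀ i, Γ i → Type*} [∀ i γ, Fintype (T i γ)]
  (D : ∀ i, CellDatum R (A i) (Γ i) (T i))

/-- Uniqueness of the structure coefficients modulo `Ā^γ`. -/
lemma coeff_ext (γ : ∀ i, Γ i) (t₀ : ∀ i, T i (γ i)) (a : ⨂[R] i, A i)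
    (r r' : (∀ i, T i (γ i)) → R)
    (hr : ∀ t : ∀ i, T i (γ i),
      a * (⨂ₜ[R] i, (D i).c (γ i) (t₀ i) (t i))
        - ∑ v : ∀ i, T i (γ i), r v • (⨂ₜ[R] i, (D i).c (γ i) (v i) (t i)) ∈
        Submodule.span R (tAbarSet D γ))
    (hr' : ∀ t : ∀ i, T i (γ i),
      a * (⨂ₜ[R] i, (D i).c (γ i) (t₀ i) (t i))
        - ∑ v : ∀ i, T i (γ i), r' v • (⨂ₜ[R] i, (D i).c (γ i) (v i) (t i)) ∈
        Submodule.span R (tAbarSet D γ)) :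
    r = r' := by
  have hmem := Submodule.sub_mem _ (hr t₀) (hr' t₀)
  have heq : (a * (⨂ₜ[R] i, (D i).c (γ i) (t₀ i) (t₀ i))
        - ∑ v : ∀ i, T i (γ i), r v • (⨂ₜ[R] i, (D i).c (γ i) (v i) (t₀ i)))
      - (a * (⨂ₜ[R] i, (D i).c (γ i) (t₀ i) (t₀ i))
        - ∑ v : ∀ i, T i (γ i), r' v • (⨂ₜ[R] i, (D i).c (γ i) (v i) (t₀ i)))
      = ∑ v : ∀ i, T i (γ i), (r' v - r v) • (⨂ₜ[R] i, (D i).c (γ i) (v i) (t₀ i)) := by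
    simp only [sub_smul, Finset.sum_sub_distrib]
    abel
  rw [heq] at hmem
  have := coeff_unique D γ t₀ (fun v => r' v - r v) hmem
  funext v
  have hv : r' v - r v = 0 := this v
  exact (sub_eq_zero.mp hv).symm
end Main2

/-- A finite tensor product `A₁ ⊗_R ⋯ ⊗_R A_K` of cellular algebras is
cellular, with involution the tensor product of the involutions, poset the product poset,
index sets the products of index sets, and cellular basis the simple tensors of cellular
basis elements.  The cell modules are the tensor products of the cell modules (any module `N`
realizing this tensor product of cell modules is a cell module for the tensor product cell
datum), and if each factor is cyclic cellular then so is the tensor product. -/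
theorem stmt_7 {R : Type*} [CommRing R] [IsDomain R] {K : ℕ}
    (A : Fin K → Type*) [∀ i, Ring (A i)] [∀ i, Algebra R (A i)]
    (Γ : Fin K → Type*) [∀ i, PartialOrder (Γ i)]
    (T : ∀ i, Γ i → Type*) [∀ i γ, Fintype (T i γ)]
    (D : ∀ i, CellDatum R (A i) (Γ i) (T i))
    (M : ∀ i, Γ i → Type*) [∀ i γ, AddCommGroup (M i γ)] [∀ i γ, Module R (M i γ)]
    [∀ i γ, Module (A i) (M i γ)] [∀ i γ, IsScalarTower R (A i) (M i γ)]
    (e : ∀ i γ, T i γ → M i γ)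
    (hM : ∀ i γ, IsCellModule (D i) γ (M i γ) (e i γ)) :
    ∃ D' : CellDatum R (⨂[R] i, A i) (∀ i, Γ i) (fun γ => ∀ i, T i (γ i)),
      (∀ (γ : ∀ i, Γ i) (s t : ∀ i, T i (γ i)),
        D'.c γ s t = ⨂ₜ[R] i, (D i).c (γ i) (s i) (t i)) ∧
      (∀ a : ∀ i, A i, D'.star (⨂ₜ[R] i, a i) = ⨂ₜ[R] i, (D i).star (a i)) ∧
      (∀ (γ : ∀ i, Γ i) (N : Type*) [AddCommGroup N] [Module R N]
        [Module (⨂[R] i, A i) N] [IsScalarTower R (⨂[R] i, A i) N]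
        (φ : (⨂[R] i, M i (γ i)) ≃ₗ[R] N),
        (∀ (a : ∀ i, A i) (m : ∀ i, M i (γ i)),
          (⨂ₜ[R] i, a i) • φ (⨂ₜ[R] i, m i) = φ (⨂ₜ[R] i, a i • m i)) →
        IsCellModule D' γ N (fun s => φ (⨂ₜ[R] i, e i (γ i) (s i))) ∧
        ((∀ j (γ' : Γ j), ∃ m : M j γ', Submodule.span (A j) {m} = ⊤) →
          ∃ nn : N, Submodule.span (⨂[R] i, A i) {nn} = ⊤)) := by
  classical
  refine ⟨TD D, fun γ s t => rfl, fun a => tstar_tprod D a, ?_⟩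
  intro γ N _ _ _ _ φ hφ
  constructor
  · refine ⟨?_, ?_, ?_⟩
    · -- linear independence
      have hli := li_tensor_of_bases (R := R) (fun i => e i (γ i))
        (fun i => (hM i (γ i)).1) (fun i => (hM i (γ i)).2.1)
      exact hli.map' φ.toLinearMap (LinearMap.ker_eq_bot_of_injective φ.injective)
    · -- span
      have hsp := span_tensor_of_bases (R := R) (fun i => e i (γ i))
        (fun i => (hM i (γ i)).2.1)
      have hrange : Set.range (fun s : ∀ i, T i (γ i) => φ (⨂ₜ[R] i, e i (γ i) (s i)))
          = ⇑φ.toLinearMap '' Set.range (fun s : ∀ i, T i (γ i) => ⨂ₜ[R] i, e i (γ i) (s i)) := by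
        rw [← Set.range_comp]; rfl
      rw [hrange, ← Submodule.map_span, hsp, Submodule.map_top, LinearEquiv.range]
    · -- the action
      intro a s r hr
      revert r
      induction a using PiTensorProduct.induction_on with
      | smul_tprod r₀ f =>
        intro r hr
        have key := fun i => (D i).mult (γ i) (s i) (f i)
        choose rr hrr using key
        have hyp' : ∀ t : ∀ i, T i (γ i),
            (r₀ • tprod R f) * (⨂ₜ[R] i, (D i).c (γ i) (s i) (t i))
              - ∑ v : ∀ i, T i (γ i), (r₀ * ∏ i, rr i (v i)) •
                (⨂ₜ[R] i, (D i).c (γ i) (v i) (t i)) ∈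
              Submodule.span R (tAbarSet D γ) := by
          intro t
          have hp := mult_pure D γ s f rr hrr t
          have heq : (r₀ • tprod R f) * (⨂ₜ[R] i, (D i).c (γ i) (s i) (t i))
              - ∑ v : ∀ i, T i (γ i), (r₀ * ∏ i, rr i (v i)) •
                (⨂ₜ[R] i, (D i).c (γ i) (v i) (t i))
              = r₀ • ((⨂ₜ[R] i, f i) * (⨂ₜ[R] i, (D i).c (γ i) (s i) (t i))
                - ∑ v : ∀ i, T i (γ i), (∏ i, rr i (v i)) •
                  (⨂ₜ[R] i, (D i).c (γ i) (v i) (t i))) := by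
            rw [smul_sub, smul_mul_assoc, Finset.smul_sum]
            congr 1
            exact Finset.sum_congr rfl fun v _ => (smul_smul _ _ _).symm
          rw [heq]
          exact Submodule.smul_mem _ _ hp
        have hreq : r = fun v => r₀ * ∏ i, rr i (v i) :=
          coeff_ext D γ s (r₀ • tprod R f) r _ hr hyp'
        have hact : (tprod R f) • φ (⨂ₜ[R] i, e i (γ i) (s i))
            = ∑ v : ∀ i, T i (γ i), (∏ i, rr i (v i)) • φ (⨂ₜ[R] i, e i (γ i) (v i)) := by
          rw [hφ f (fun i => e i (γ i) (s i))]
          have h2 : ∀ i, f i • e i (γ i) (s i) = ∑ v : T i (γ i), rr i v • e i (γ i) v :=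
            fun i => (hM i (γ i)).2.2 (f i) (s i) (rr i) (hrr i)
          have h3 : (⨂ₜ[R] i, f i • e i (γ i) (s i))
              = ∑ v : ∀ i, T i (γ i), (∏ i, rr i (v i)) • ⨂ₜ[R] i, e i (γ i) (v i) := by
            rw [congrArg (PiTensorProduct.tprod R) (funext h2)]
            rw [show (⨂ₜ[R] i, (∑ v : T i (γ i), rr i v • e i (γ i) v))
                = ∑ v : ∀ i, T i (γ i), ⨂ₜ[R] i, (rr i (v i) • e i (γ i) (v i)) from
              MultilinearMap.map_sum _ _]
            exact Finset.sum_congr rfl fun v _ => MultilinearMap.map_smul_univ _ _ _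
          rw [h3, map_sum]
          exact Finset.sum_congr rfl fun v _ => by rw [map_smul]
        rw [hreq]
        calc (r₀ • tprod R f) • φ (⨂ₜ[R] i, e i (γ i) (s i))
            = r₀ • ((tprod R f) • φ (⨂ₜ[R] i, e i (γ i) (s i))) := smul_assoc r₀ _ _
          _ = r₀ • ∑ v : ∀ i, T i (γ i), (∏ i, rr i (v i)) • φ (⨂ₜ[R] i, e i (γ i) (v i)) := by
              rw [hact]
          _ = ∑ v : ∀ i, T i (γ i), (r₀ * ∏ i, rr i (v i)) • φ (⨂ₜ[R] i, e i (γ i) (v i)) := by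
              rw [Finset.smul_sum]
              exact Finset.sum_congr rfl fun v _ => smul_smul _ _ _
      | add x y hx hy =>
        intro r hr
        obtain ⟨rx, hrx⟩ := (TD D).mult γ s x
        obtain ⟨ry, hry⟩ := (TD D).mult γ s y
        have hxy : ∀ t : ∀ i, T i (γ i),
            (x + y) * (⨂ₜ[R] i, (D i).c (γ i) (s i) (t i))
              - ∑ v : ∀ i, T i (γ i), (rx v + ry v) •
                (⨂ₜ[R] i, (D i).c (γ i) (v i) (t i)) ∈
              Submodule.span R (tAbarSet D γ) := by
          intro t
          have heq : (x + y) * (⨂ₜ[R] i, (D i).c (γ i) (s i) (t i))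
              - ∑ v : ∀ i, T i (γ i), (rx v + ry v) •
                (⨂ₜ[R] i, (D i).c (γ i) (v i) (t i))
              = (x * (⨂ₜ[R] i, (D i).c (γ i) (s i) (t i))
                  - ∑ v : ∀ i, T i (γ i), rx v • (⨂ₜ[R] i, (D i).c (γ i) (v i) (t i)))
                + (y * (⨂ₜ[R] i, (D i).c (γ i) (s i) (t i))
                  - ∑ v : ∀ i, T i (γ i), ry v • (⨂ₜ[R] i, (D i).c (γ i) (v i) (t i))) := by
            rw [add_mul]
            simp only [add_smul, Finset.sum_add_distrib]
            abel
          rw [heq]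
          exact Submodule.add_mem _ (hrx t) (hry t)
        have hreq : r = fun v => rx v + ry v :=
          coeff_ext D γ s (x + y) r _ hr hxy
        rw [hreq]
        have h1 := hx rx hrx
        have h2 := hy ry hry
        calc (x + y) • φ (⨂ₜ[R] i, e i (γ i) (s i))
            = x • φ (⨂ₜ[R] i, e i (γ i) (s i)) + y • φ (⨂ₜ[R] i, e i (γ i) (s i)) :=
              add_smul _ _ _
          _ = (∑ v : ∀ i, T i (γ i), rx v • φ (⨂ₜ[R] i, e i (γ i) (v i)))
              + ∑ v : ∀ i, T i (γ i), ry v • φ (⨂ₜ[R] i, e i (γ i) (v i)) := by rw [h1, h2]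
          _ = ∑ v : ∀ i, T i (γ i), (rx v + ry v) • φ (⨂ₜ[R] i, e i (γ i) (v i)) := by
              rw [← Finset.sum_add_distrib]
              exact Finset.sum_congr rfl fun v _ => (add_smul _ _ _).symm
  · -- cyclicity
    intro hcyc
    choose m hm using fun j => hcyc j (γ j)
    refine ⟨φ (⨂ₜ[R] i, m i), ?_⟩
    rw [eq_top_iff]
    rintro n -
    have key : ∀ z : ⨂[R] i, M i (γ i),
        φ z ∈ Submodule.span (⨂[R] i, A i) {φ (⨂ₜ[R] i, m i)} := by
      intro z
      have hz : z ∈ Submodule.span R (Set.range (PiTensorProduct.tprod R)) := by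
        rw [PiTensorProduct.span_tprod_eq_top]; trivial
      induction hz using Submodule.span_induction with
      | mem x hx =>
        obtain ⟨mm, rfl⟩ := hx
        have hmm : ∀ i, ∃ a : A i, a • m i = mm i := by
          intro i
          have : mm i ∈ Submodule.span (A i) {m i} := by rw [hm i]; trivial
          rwa [Submodule.mem_span_singleton] at this
        choose a ha using hmm
        have heq : φ (tprod R mm) = (⨂ₜ[R] i, a i) • φ (⨂ₜ[R] i, m i) := by
          rw [hφ a m]
          exact congrArg φ (congrArg (PiTensorProduct.tprod R)
            (funext fun i => (ha i).symm))
        rw [heq]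
        exact Submodule.smul_mem _ _ (Submodule.mem_span_singleton_self _)
      | zero => rw [map_zero]; exact Submodule.zero_mem _
      | add x y _ _ hx hy => rw [map_add]; exact Submodule.add_mem _ hx hy
      | smul r x _ hx =>
        rw [map_smul]
        exact Submodule.smul_of_tower_mem _ r hx
    have := key (φ.symm n)
    rwa [LinearEquiv.apply_symm_apply] at this
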